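/- Let G be a finite group and H a subgroup whose core in G is not contained in the center of G. Then for every normal subset Y of G with CS(G,Y) connected, H is not a total perfect code of CS(G,Y). -/

import Mathlib

def caySum (G : Type*) [Group G] (X : Set G) : SimpleGraph G :=
  SimpleGraph.fromRel (fun g h => g * h ∈ X)

def IsNormalSet {G : Type*} [Group G] (X : Set G) : Prop :=
  ∀ g x : G, x ∈ X → g⁻¹ * x * g ∈ X

def IsPerfectCode {V : Type*} (Γ : SimpleGraph V) (C : Set V) : Prop :=
  (∀ u ∈ C, ∀ v ∈ C, ¬ Γ.Adj u v) ∧ ∀ v ∉ C, ∃! u, u ∈ C ∧ Γ.Adj v u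

def IsTotalPerfectCode {V : Type*} (Γ : SimpleGraph V) (C : Set V) : Prop :=
  ∀ v, ∃! u, u ∈ C ∧ Γ.Adj v u

def IsLeftTransversal {G : Type*} [Group G] (T : Set G) (H : Subgroup G) : Prop :=
  ∀ g : G, ∃! t, t ∈ T ∧ g⁻¹ * t ∈ H

theorem not_totalPerfectCode_of_core_not_central {G : Type*} [Group G] [Finite G]
    (H : Subgroup G) (hcore : ¬ H.normalCore ≤ Subgroup.center G) :
    ∀ Y : Set G, IsNormalSet Y → (caySum G Y).Connected →
      ¬ IsTotalPerfectCode (caySum G Y) (H : Set G) := by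
  intro Y hY hconn htpc
  apply hcore
  intro n hn
  have hNle := Subgroup.normalCore_le H
  have hNnorm : (H.normalCore).Normal := H.normalCore_normal
  have adj : ∀ a b : G, a ≠ b → a * b ∈ Y → (caySum G Y).Adj a b := by
    intro a b hne hm
    exact (SimpleGraph.fromRel_adj _ _ _).2 ⟨hne, Or.inl hm⟩
  -- n commutes with every element of Y
  have key : ∀ y ∈ Y, y * n = n * y := by
    intro y hy
    by_contra hne
    have hy1 : y ≠ 1 := by rintro rfl; exact hne (by simp)
    have hc1N : y⁻¹ * n⁻¹ * y * n ∈ H.normalCore :=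
      mul_mem (hNnorm.conj_mem' n⁻¹ (inv_mem hn) y) hn
    -- Step 1: n⁻¹ * y * n = y * y
    have hstep1 : n⁻¹ * y * n = y * y := by
      by_cases hcy : y⁻¹ * n⁻¹ * y * n = y
      · have h := congrArg (y * ·) hcy
        rw [show n⁻¹ * y * n = y * (y⁻¹ * n⁻¹ * y * n) from by group, hcy]
      · obtain ⟨u, -, hu⟩ := htpc y
        have h1 : (1 : G) = u := hu 1 ⟨one_mem H, adj y 1 hy1 (by simpa using hy)⟩
        have h2 : y⁻¹ * n⁻¹ * y * n = u := by
          refine hu _ ⟨hNle hc1N, adj y _ (fun h => hcy h.symm) ?_⟩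
          rw [show y * (y⁻¹ * n⁻¹ * y * n) = n⁻¹ * y * n from by group]
          exact hY n y hy
        have h3 : y⁻¹ * n⁻¹ * y * n = 1 := h2.trans h1.symm
        have h4 : y⁻¹ * (n⁻¹ * y * n) = 1 := by rw [← h3]; group
        have h5 : n⁻¹ * y * n = y := by
          have := congrArg (y * ·) h4
          simpa [← mul_assoc] using this
        exact absurd (by
          have := congrArg (n * ·) h5
          simpa [← mul_assoc, mul_assoc] using this : y * n = n * y) hne
    -- Step 2: vertex y * n
    by_cases hA : y * n = n⁻¹
    · have hy' : y = n⁻¹ * n⁻¹ := by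
        have := congrArg (· * n⁻¹) hA
        simpa using this
      exact hne (by rw [hy']; group)
    by_cases hB : y * n = n⁻¹ * y
    · have h5 : y * (n * n) = y * y := by rw [← mul_assoc, hB, hstep1]
      have h6 := mul_left_cancel h5
      exact hne (by rw [← h6]; group)
    obtain ⟨u, -, hu⟩ := htpc (y * n)
    have h1 : n⁻¹ = u := by
      refine hu n⁻¹ ⟨inv_mem (hNle hn), adj _ _ hA ?_⟩
      simpa using hy
    have h2 : n⁻¹ * y = u := by
      have hBH : n⁻¹ * y ∈ H := by
        have hm : n⁻¹ * (y⁻¹ * n⁻¹ * y * n) ∈ H.normalCore := mul_mem (inv_mem hn) hc1N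
        have he : n⁻¹ * (y⁻¹ * n⁻¹ * y * n) = n⁻¹ * y := by
          rw [show n⁻¹ * (y⁻¹ * n⁻¹ * y * n) = n⁻¹ * y⁻¹ * (n⁻¹ * y * n) from by group,
            hstep1]
          group
        rw [he] at hm
        exact hNle hm
      refine hu _ ⟨hBH, adj _ _ hB ?_⟩
      rw [show y * n * (n⁻¹ * y) = y * y from by group, ← hstep1]
      exact hY n y hy
    have : y = 1 := by
      have h3 : n⁻¹ = n⁻¹ * y := h1.trans h2.symm
      have := congrArg (n * ·) h3
      simpa using this.symm
    exact hy1 this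
  -- closure of Y is everything
  have hgen : ∀ g : G, g ∈ Subgroup.closure Y := by
    intro g
    obtain ⟨w⟩ := hconn.preconnected 1 g
    have step : ∀ {a b : G}, (caySum G Y).Walk a b →
        a ∈ Subgroup.closure Y → b ∈ Subgroup.closure Y := by
      intro a b w
      induction w with
      | nil => exact id
      | @cons a c b h p ih =>
        intro ha
        rcases (SimpleGraph.fromRel_adj _ _ _).1 h with ⟨-, hm | hm⟩
        · have : a⁻¹ * (a * c) ∈ Subgroup.closure Y :=
            mul_mem (inv_mem ha) (Subgroup.subset_closure hm)
          exact ih (by simpa using this)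
        · have : (c * a) * a⁻¹ ∈ Subgroup.closure Y :=
            mul_mem (Subgroup.subset_closure hm) (inv_mem ha)
          exact ih (by simpa using this)
    exact step w (one_mem _)
  rw [Subgroup.mem_center_iff]
  intro g
  have hle : Subgroup.closure Y ≤ Subgroup.centralizer {n} := by
    rw [Subgroup.closure_le]
    intro y hy
    rw [SetLike.mem_coe, Subgroup.mem_centralizer_iff]
    rintro m rfl
    exact (key y hy).symm
  have := Subgroup.mem_centralizer_iff.1 (hle (hgen g)) n rfl
  exact this.symm
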